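/- Let d and N be positive integers, let A₁,…,A_N be positive semidefinite complex d×d matrices, and let π₁,…,π_N be N mutually orthogonal permutations of Fin N. Then ‖ ∑_{i=1}^N Aᵢ ‖ ≤ ∑_{k=1}^N max_{i ∈ Fin N} ‖ √(Aᵢ) · √(A_{πₖ(i)}) ‖. -/

import Mathlib

open scoped BigOperators ComplexOrder

noncomputable section

/-- The `ℓ² → ℓ²` operator norm of a complex square matrix. -/
noncomputable def opNorm {m : Type*} [Fintype m] [DecidableEq m] (M : Matrix m m ℂ) : ℝ :=
  ‖Matrix.toEuclideanCLM (𝕜 := ℂ) M‖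

/-- The positive semidefinite square root of a positive semidefinite matrix
(the definition removed from Mathlib, restated verbatim). -/
noncomputable def Matrix.PosSemidef.sqrt {n 𝕜 : Type*} [Fintype n] [DecidableEq n] [RCLike 𝕜]
    {A : Matrix n n 𝕜} (hA : A.PosSemidef) : Matrix n n 𝕜 :=
  hA.1.eigenvectorUnitary.1 * Matrix.diagonal ((↑) ∘ (√·) ∘ hA.1.eigenvalues) *
  (star hA.1.eigenvectorUnitary : Matrix n n 𝕜)

theorem Matrix.PosSemidef.sqrt_mul_self {n 𝕜 : Type*} [Fintype n] [DecidableEq n] [RCLike 𝕜]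
    {A : Matrix n n 𝕜} (hA : A.PosSemidef) : hA.sqrt * hA.sqrt = A := by
  unfold Matrix.PosSemidef.sqrt
  have hU : (star hA.1.eigenvectorUnitary : Matrix n n 𝕜) * hA.1.eigenvectorUnitary.1 = 1 :=
    Unitary.coe_star_mul_self _
  conv_rhs => rw [hA.1.spectral_theorem, Unitary.conjStarAlgAut_apply]
  simp only [mul_assoc]
  rw [← mul_assoc (star _ : Matrix n n 𝕜) _, hU, one_mul, ← mul_assoc (Matrix.diagonal _),
    Matrix.diagonal_mul_diagonal]
  congr 3
  funext i
  simp only [Function.comp_apply, ← RCLike.ofReal_mul]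
  rw [Real.mul_self_sqrt (hA.eigenvalues_nonneg i)]

theorem Matrix.PosSemidef.isHermitian_sqrt {n 𝕜 : Type*} [Fintype n] [DecidableEq n] [RCLike 𝕜]
    {A : Matrix n n 𝕜} (hA : A.PosSemidef) : hA.sqrt.IsHermitian := by
  unfold Matrix.PosSemidef.sqrt Matrix.IsHermitian
  rw [Matrix.conjTranspose_mul, Matrix.conjTranspose_mul, Matrix.diagonal_conjTranspose,
    ← Matrix.star_eq_conjTranspose, ← Matrix.star_eq_conjTranspose, star_star,
    mul_assoc]
  congr 3
  funext i
  simp [RCLike.star_def]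

/-- Lemma 2 of Tomamichel–Fehr–Kaniewski–Wehner: operator-norm bound on a sum of
positive semidefinite matrices via mutually orthogonal permutations. -/
theorem opNorm_sum_le_of_mutually_orthogonal_perms
    {d N : ℕ} (hd : 0 < d) (hN : 0 < N)
    (A : Fin N → Matrix (Fin d) (Fin d) ℂ)
    (hA : ∀ i, (A i).PosSemidef)
    (π : Fin N → Equiv.Perm (Fin N))
    (hπ : ∀ k k' : Fin N, k ≠ k' → ∀ i : Fin N, π k i ≠ π k' i) :
    opNorm (∑ i : Fin N, A i)
      ≤ ∑ k : Fin N,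
          Finset.univ.sup' ⟨⟨0, hN⟩, Finset.mem_univ _⟩
            (fun i : Fin N => opNorm ((hA i).sqrt * (hA (π k i)).sqrt)) := by
  classical
  set c : Fin N → ℝ := fun k =>
    Finset.univ.sup' ⟨⟨0, hN⟩, Finset.mem_univ _⟩
      (fun i : Fin N => opNorm ((hA i).sqrt * (hA (π k i)).sqrt)) with hc
  set S : Fin N → (EuclideanSpace ℂ (Fin d) →L[ℂ] EuclideanSpace ℂ (Fin d)) :=
    fun i => Matrix.toEuclideanCLM (𝕜 := ℂ) (hA i).sqrt with hSdef
  have hadj : ∀ i, ContinuousLinearMap.adjoint (S i) = S i := by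
    intro i
    show ContinuousLinearMap.adjoint (Matrix.toEuclideanCLM (𝕜 := ℂ) (hA i).sqrt)
      = Matrix.toEuclideanCLM (𝕜 := ℂ) (hA i).sqrt
    rw [← ContinuousLinearMap.star_eq_adjoint,
      ← map_star (Matrix.toEuclideanCLM (𝕜 := ℂ)) ((hA i).sqrt),
      Matrix.star_eq_conjTranspose, (hA i).isHermitian_sqrt]
  have hinner : ∀ (i : Fin N) (x y : EuclideanSpace ℂ (Fin d)),
      inner (𝕜 := ℂ) (S i y) x = inner (𝕜 := ℂ) y (S i x) := by
    intro i x y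
    have h := ContinuousLinearMap.adjoint_inner_left (S i) x y
    rw [hadj i] at h
    exact h
  set T : EuclideanSpace ℂ (Fin d) →L[ℂ] EuclideanSpace ℂ (Fin d) :=
    Matrix.toEuclideanCLM (𝕜 := ℂ) (∑ i : Fin N, A i) with hTdef
  have hTapp : ∀ v, T v = ∑ i : Fin N, S i (S i v) := by
    intro v
    have : T = ∑ i : Fin N, S i * S i := by
      rw [hTdef, map_sum]
      refine Finset.sum_congr rfl fun i _ => ?_
      rw [hSdef, ← map_mul, (hA i).sqrt_mul_self]
    rw [this]
    simp [ContinuousLinearMap.sum_apply, ContinuousLinearMap.mul_apply]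
  have hck : ∀ k, 0 ≤ c k := by
    intro k
    rw [hc]
    exact le_trans (norm_nonneg _)
      (Finset.le_sup' (fun i : Fin N => opNorm ((hA i).sqrt * (hA (π k i)).sqrt))
        (Finset.mem_univ (⟨0, hN⟩ : Fin N)))
  have hCnonneg : 0 ≤ ∑ k : Fin N, c k := Finset.sum_nonneg fun k _ => hck k
  show ‖T‖ ≤ ∑ k : Fin N, c k
  refine ContinuousLinearMap.opNorm_le_bound T hCnonneg fun v => ?_
  set w : Fin N → ℝ := fun i => ‖S i v‖ with hw
  set W : ℝ := ∑ i : Fin N, w i ^ 2 with hW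
  have hWre : W = RCLike.re (inner (𝕜 := ℂ) v (T v)) := by
    rw [hTapp, inner_sum, map_sum]
    refine Finset.sum_congr rfl fun i _ => ?_
    rw [← hinner i (S i v) v, inner_self_eq_norm_sq]
  have hWle : W ≤ ‖v‖ * ‖T v‖ := by
    rw [hWre]
    exact le_trans (RCLike.re_le_norm _) (norm_inner_le_norm _ _)
  have key : ‖T v‖ ^ 2 ≤ (∑ k : Fin N, c k) * W := by
    have h1 : ‖T v‖ ^ 2 = RCLike.re (inner (𝕜 := ℂ) (T v) (T v)) :=
      (inner_self_eq_norm_sq _).symm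
    have h2 : RCLike.re (inner (𝕜 := ℂ) (T v) (T v))
        ≤ ∑ i : Fin N, ∑ j : Fin N,
            opNorm ((hA i).sqrt * (hA j).sqrt) * (w i * w j) := by
      rw [hTapp, sum_inner, map_sum]
      refine Finset.sum_le_sum fun i _ => ?_
      rw [inner_sum, map_sum]
      refine Finset.sum_le_sum fun j _ => ?_
      have e1 : inner (𝕜 := ℂ) (S i (S i v)) (S j (S j v))
          = inner (𝕜 := ℂ) (S i v) (S i (S j (S j v))) :=
        hinner i (S j (S j v)) (S i v)
      have e2 : S i (S j (S j v))
          = Matrix.toEuclideanCLM (𝕜 := ℂ) ((hA i).sqrt * (hA j).sqrt) (S j v) := by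
        rw [map_mul, ContinuousLinearMap.mul_apply, hSdef]
      calc RCLike.re (inner (𝕜 := ℂ) (S i (S i v)) (S j (S j v)))
          ≤ ‖inner (𝕜 := ℂ) (S i v) (S i (S j (S j v)))‖ := by
            rw [e1]; exact RCLike.re_le_norm _
        _ ≤ ‖S i v‖ * ‖S i (S j (S j v))‖ := norm_inner_le_norm _ _
        _ ≤ ‖S i v‖ * (opNorm ((hA i).sqrt * (hA j).sqrt) * ‖S j v‖) := by
            refine mul_le_mul_of_nonneg_left ?_ (norm_nonneg _)
            rw [e2]
            exact ContinuousLinearMap.le_opNorm _ _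
        _ = opNorm ((hA i).sqrt * (hA j).sqrt) * (w i * w j) := by rw [hw]; ring
    have h3 : ∀ i : Fin N,
        (∑ j : Fin N, opNorm ((hA i).sqrt * (hA j).sqrt) * (w i * w j))
        = ∑ k : Fin N, opNorm ((hA i).sqrt * (hA (π k i)).sqrt) * (w i * w (π k i)) := by
      intro i
      have hbij : Function.Bijective (fun k : Fin N => π k i) :=
        Finite.injective_iff_bijective.mp fun k k' hkk' => by
          by_contra hne
          exact hπ k k' hne i hkk'
      exact (Fintype.sum_bijective _ hbij
        (fun k => opNorm ((hA i).sqrt * (hA (π k i)).sqrt) * (w i * w (π k i)))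
        (fun j => opNorm ((hA i).sqrt * (hA j).sqrt) * (w i * w j))
        (fun k => rfl)).symm
    have h4 : ∀ k : Fin N,
        (∑ i : Fin N, opNorm ((hA i).sqrt * (hA (π k i)).sqrt) * (w i * w (π k i)))
        ≤ c k * W := by
      intro k
      have hCS : ∑ i : Fin N, w i * w (π k i) ≤ W := by
        have heach : ∀ i : Fin N, w i * w (π k i) ≤ (w i ^ 2 + w (π k i) ^ 2) / 2 :=
          fun i => by nlinarith [sq_nonneg (w i - w (π k i))]
        calc ∑ i : Fin N, w i * w (π k i)
            ≤ ∑ i : Fin N, (w i ^ 2 + w (π k i) ^ 2) / 2 :=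
              Finset.sum_le_sum fun i _ => heach i
          _ = W := by
              rw [← Finset.sum_div, Finset.sum_add_distrib,
                Equiv.sum_comp (π k) (fun i => w i ^ 2), hW]
              ring
      calc (∑ i : Fin N, opNorm ((hA i).sqrt * (hA (π k i)).sqrt) * (w i * w (π k i)))
          ≤ ∑ i : Fin N, c k * (w i * w (π k i)) := by
            refine Finset.sum_le_sum fun i _ => ?_
            refine mul_le_mul_of_nonneg_right ?_
              (mul_nonneg (norm_nonneg _) (norm_nonneg _))
            exact Finset.le_sup' (fun i : Fin N => opNorm ((hA i).sqrt * (hA (π k i)).sqrt))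
              (Finset.mem_univ i)
        _ = c k * ∑ i : Fin N, w i * w (π k i) := by rw [Finset.mul_sum]
        _ ≤ c k * W := mul_le_mul_of_nonneg_left hCS (hck k)
    calc ‖T v‖ ^ 2 = RCLike.re (inner (𝕜 := ℂ) (T v) (T v)) := h1
      _ ≤ ∑ i : Fin N, ∑ j : Fin N,
            opNorm ((hA i).sqrt * (hA j).sqrt) * (w i * w j) := h2
      _ = ∑ i : Fin N, ∑ k : Fin N,
            opNorm ((hA i).sqrt * (hA (π k i)).sqrt) * (w i * w (π k i)) :=
          Finset.sum_congr rfl fun i _ => h3 i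
      _ = ∑ k : Fin N, ∑ i : Fin N,
            opNorm ((hA i).sqrt * (hA (π k i)).sqrt) * (w i * w (π k i)) :=
          Finset.sum_comm
      _ ≤ ∑ k : Fin N, c k * W := Finset.sum_le_sum fun k _ => h4 k
      _ = (∑ k : Fin N, c k) * W := by rw [Finset.sum_mul]
  rcases eq_or_lt_of_le (norm_nonneg (T v)) with h0 | hpos
  · rw [← h0]
    exact mul_nonneg hCnonneg (norm_nonneg v)
  · have h5 : ‖T v‖ * ‖T v‖ ≤ ((∑ k : Fin N, c k) * ‖v‖) * ‖T v‖ := by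
      have := le_trans key (mul_le_mul_of_nonneg_left hWle hCnonneg)
      nlinarith
    exact le_of_mul_le_mul_right h5 hpos
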